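/- Let r ≥ 1, N ≥ 2, let c_1,…,c_N be pairwise distinct complex constants, and let A_1,…,A_N : U → M_r(ℂ) be holomorphic on a connected open set U ⊆ ℂ^N. Then the following are equivalent: (i) for every i, every t ∈ U and every λ ∈ ℂ \ {c_1,…,c_N}, the Lax equation ∂M(λ,t)/∂t_i = [M(λ,t), A_i(t)/(λ − c_i)] holds; (ii) the functions A_1,…,A_N satisfy Garnier's autonomous system on U. -/

import Mathlib

open Matrix Finset

attribute [local instance] Matrix.normedAddCommGroup Matrix.normedSpace

private lemma residue_zero {M : Type*} [AddCommGroup M] [Module ℂ M]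
    [TopologicalSpace M] [IsTopologicalAddGroup M] [ContinuousSMul ℂ M] [T2Space M]
    {N : ℕ} (c : Fin N → ℂ) (hc : ∀ i j : Fin N, i ≠ j → c i ≠ c j)
    (B : Fin N → M)
    (h : ∀ z : ℂ, (∀ k, z ≠ c k) → ∑ k, (z - c k)⁻¹ • B k = 0)
    (j : Fin N) : B j = 0 := by
  set G : ℂ → M := fun z => ∑ k, (∏ l ∈ univ.erase k, (z - c l)) • B k with hGdef
  have hGc : Continuous G := by
    refine continuous_finset_sum _ fun k _ => Continuous.smul ?_ continuous_const
    exact continuous_finset_prod _ fun l _ => by fun_prop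
  have hdense : Dense {z : ℂ | ∀ k, z ≠ c k} := by
    have he : {z : ℂ | ∀ k, z ≠ c k} = (Set.range c)ᶜ := by
      ext z; simp [eq_comm, Set.mem_range, not_exists]
    rw [he]
    exact (Set.countable_range c).dense_compl ℂ
  have hG0 : G = fun _ => (0 : M) := by
    refine hGc.ext_on hdense continuous_const fun z hz => ?_
    have hz' : ∀ k, z ≠ c k := hz
    have hzc : ∀ k, z - c k ≠ 0 := fun k => sub_ne_zero.2 (hz' k)
    calc G z = (∏ l, (z - c l)) • ∑ k, (z - c k)⁻¹ • B k := by
          rw [Finset.smul_sum]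
          refine Finset.sum_congr rfl fun k _ => ?_
          rw [smul_smul]
          congr 1
          rw [← Finset.mul_prod_erase _ _ (Finset.mem_univ k)]
          field_simp
          exact (mul_div_cancel_right₀ _ (hzc k)).symm
      _ = 0 := by rw [h z hz', smul_zero]
  have hj := congrFun hG0 (c j)
  simp only [hGdef] at hj
  rw [Finset.sum_eq_single j] at hj
  · have hne : (∏ l ∈ univ.erase j, (c j - c l)) ≠ 0 := by
      rw [Finset.prod_ne_zero_iff]
      intro l hl
      exact sub_ne_zero.2 (hc j l (Ne.symm (Finset.ne_of_mem_erase hl)))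
    rcases smul_eq_zero.mp hj with h1 | h2
    · exact absurd h1 hne
    · exact h2
  · intro k _ hk
    refine smul_eq_zero_of_left ?_ _
    exact Finset.prod_eq_zero (Finset.mem_erase.2 ⟨Ne.symm hk, Finset.mem_univ j⟩) (sub_self _)
  · intro hj'; exact absurd (Finset.mem_univ j) hj'

/-- The Garnier right-hand side for derivative direction `i`, component `k`. -/
private noncomputable def Gv {r N : ℕ} (c : Fin N → ℂ) (X : Fin N → Matrix (Fin r) (Fin r) ℂ)
    (i k : Fin N) : Matrix (Fin r) (Fin r) ℂ :=
  if k = i then -∑ l ∈ Finset.univ.erase i, (c i - c l)⁻¹ • ⁅X i, X l⁆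
  else (c k - c i)⁻¹ • ⁅X k, X i⁆

private lemma expand_lie {r N : ℕ} (a : Fin N → ℂ) (b : ℂ)
    (X : Fin N → Matrix (Fin r) (Fin r) ℂ) (Y : Matrix (Fin r) (Fin r) ℂ) :
    ⁅∑ k, a k • X k, b • Y⁆ = ∑ k, (a k * b) • ⁅X k, Y⁆ := by
  simp only [Ring.lie_def, smul_sub, Finset.sum_sub_distrib, Finset.sum_mul, Finset.mul_sum,
    smul_mul_assoc, mul_smul_comm, smul_smul]
  simp [smul_smul, mul_comm b]
  rw [Finset.smul_sum]
  exact Finset.sum_congr rfl fun k _ => by rw [smul_smul, mul_comm]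

private lemma key_ident {r N : ℕ} (c : Fin N → ℂ) (hc : ∀ i j : Fin N, i ≠ j → c i ≠ c j)
    (X : Fin N → Matrix (Fin r) (Fin r) ℂ) (i : Fin N) (z : ℂ) (hz : ∀ k, z ≠ c k) :
    ⁅∑ k, (z - c k)⁻¹ • X k, (z - c i)⁻¹ • X i⁆ = ∑ k, (z - c k)⁻¹ • Gv c X i k := by
  have hzc : ∀ k, z - c k ≠ 0 := fun k => sub_ne_zero.2 (hz k)
  rw [expand_lie]
  rw [← Finset.add_sum_erase _ _ (Finset.mem_univ i),
      ← Finset.add_sum_erase _ (fun k => (z - c k)⁻¹ • Gv c X i k) (Finset.mem_univ i)]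
  have h1 : ((z - c i)⁻¹ * (z - c i)⁻¹) • ⁅X i, X i⁆ = 0 := by
    simp only [Ring.lie_def, sub_self, smul_zero]
  rw [h1, zero_add]
  have h2 : (z - c i)⁻¹ • Gv c X i i
      = ∑ k ∈ univ.erase i, ((z - c i)⁻¹ * (c i - c k)⁻¹) • ⁅X k, X i⁆ := by
    rw [Gv, if_pos rfl, smul_neg, Finset.smul_sum, ← Finset.sum_neg_distrib]
    refine Finset.sum_congr rfl fun k _ => ?_
    rw [smul_smul, ← smul_neg]
    simp only [Ring.lie_def, neg_sub]
  rw [h2, ← Finset.sum_add_distrib]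
  refine Finset.sum_congr rfl fun k hk => ?_
  have hki : k ≠ i := Finset.ne_of_mem_erase hk
  rw [Gv, if_neg hki, smul_smul, ← add_smul]
  congr 1
  have hik : c k - c i ≠ 0 := sub_ne_zero.2 (hc k i hki)
  have hic : c i - c k ≠ 0 := sub_ne_zero.2 (hc i k (Ne.symm hki))
  have hzi := hzc i
  have hzk := hzc k
  field_simp
  ring

theorem garnier_iff_lax
    (r N : ℕ) (hr : 1 ≤ r) (hN : 2 ≤ N)
    (c : Fin N → ℂ) (hc : ∀ i j : Fin N, i ≠ j → c i ≠ c j)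
    (U : Set (Fin N → ℂ)) (hUo : IsOpen U) (hUc : IsConnected U)
    (A : Fin N → (Fin N → ℂ) → Matrix (Fin r) (Fin r) ℂ)
    (hA : ∀ i, DifferentiableOn ℂ (A i) U) :
    (∀ i : Fin N, ∀ t ∈ U, ∀ z : ℂ, (∀ k : Fin N, z ≠ c k) →
        fderiv ℂ (fun s => ∑ k, (z - c k)⁻¹ • A k s) t (Pi.single i 1)
          = ⁅∑ k, (z - c k)⁻¹ • A k t, (z - c i)⁻¹ • A i t⁆)
    ↔
    (∀ i j : Fin N, ∀ t ∈ U,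
        (i ≠ j → fderiv ℂ (A i) t (Pi.single j 1)
            = (c i - c j)⁻¹ • ⁅A i t, A j t⁆) ∧
        fderiv ℂ (A i) t (Pi.single i 1)
            = -∑ k ∈ Finset.univ.erase i, (c i - c k)⁻¹ • ⁅A i t, A k t⁆) := by
  have hdiff : ∀ (k : Fin N) (t : Fin N → ℂ), t ∈ U → DifferentiableAt ℂ (A k) t :=
    fun k t ht => (hA k).differentiableAt (hUo.mem_nhds ht)
  have hder : ∀ (z : ℂ) (t : Fin N → ℂ), t ∈ U → ∀ v : Fin N → ℂ,
      fderiv ℂ (fun s => ∑ k, (z - c k)⁻¹ • A k s) t v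
        = ∑ k, (z - c k)⁻¹ • fderiv ℂ (A k) t v := by
    intro z t ht v
    have h := HasFDerivAt.fun_sum (u := Finset.univ) fun k _ =>
      (hdiff k t ht).hasFDerivAt.const_smul ((z - c k)⁻¹)
    refine (congrArg (fun L => L v) h.fderiv).trans ?_
    simp
    exact Finset.sum_congr rfl fun k _ => rfl
  constructor
  · intro h
    have main : ∀ (j : Fin N) (t : Fin N → ℂ), t ∈ U → ∀ k : Fin N,
        fderiv ℂ (A k) t (Pi.single j 1) = Gv c (fun l => A l t) j k := by
      intro j t ht
      have hz0 : ∀ z : ℂ, (∀ k, z ≠ c k) →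
          ∑ k, (z - c k)⁻¹ •
            (fderiv ℂ (A k) t (Pi.single j 1) - Gv c (fun l => A l t) j k) = 0 := by
        intro z hz
        have hlax := h j t ht z hz
        rw [hder z t ht, key_ident c hc (fun l => A l t) j z hz] at hlax
        simp only [smul_sub, Finset.sum_sub_distrib]
        rw [hlax, sub_self]
      intro k
      exact sub_eq_zero.mp (residue_zero c hc _ hz0 k)
    intro i j t ht
    constructor
    · intro hij
      have := main j t ht i
      rw [this, Gv, if_neg hij]
    · have := main i t ht i
      rw [this, Gv, if_pos rfl]
  · intro h i t ht z hz
    rw [hder z t ht, key_ident c hc (fun l => A l t) i z hz]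
    refine Finset.sum_congr rfl fun k _ => ?_
    congr 1
    by_cases hki : k = i
    · subst hki
      rw [Gv, if_pos rfl, (h k k t ht).2]
    · rw [Gv, if_neg hki]
      exact (h k i t ht).1 hki
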